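/- There is an absolute constant C such that: for every measure space (X, μ), every integer N ≥ 1, every functions φ_1, …, φ_N ∈ L²(μ), and every A > 0 satisfying ‖Σ_{j=1}^N c_j φ_j‖_{L²(μ)} ≤ A for every choice of coefficients c_1, …, c_N ∈ {−1, 0, 1}, one has ‖ max_{1 ≤ n ≤ N} | Σ_{j=1}^n φ_j | ‖_{L²(μ)} ≤ C A log(2 + N). -/

import Mathlib

open MeasureTheory

open Finset

-- telescoping dyadic decomposition
lemma rm_telescope {M : Type*} [AddCommMonoid M] (f : ℕ → M) (g : ℕ → ℕ)
    (hg : ∀ k, g (k+1) ≤ g k) (K : ℕ) :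
    ∑ k ∈ range K, ∑ j ∈ Finset.Ico (g (k+1)) (g k), f j
      = ∑ j ∈ Finset.Ico (g K) (g 0), f j := by
  induction K with
  | zero => simp
  | succ K ih =>
      rw [Finset.sum_range_succ, ih, add_comm,
        Finset.sum_Ico_consecutive _ (hg K) ((antitone_nat_of_succ_le hg) (Nat.zero_le K))]

-- sign averaging / parallelogram identity
lemma rm_signs {ι : Type*} [DecidableEq ι] (s : Finset ι) (z : ι → ℂ) :
    ∑ t ∈ s.powerset, ‖∑ i ∈ s, (if i ∈ t then z i else - z i)‖^2
      = 2^s.card * ∑ i ∈ s, ‖z i‖^2 := by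
  induction s using Finset.induction_on with
  | empty => simp
  | @insert a s ha ih =>
      rw [Finset.powerset_insert, Finset.sum_union, Finset.sum_image]
      · have key : ∀ t ∈ s.powerset,
            (‖∑ i ∈ insert a s, (if i ∈ t then z i else - z i)‖^2
              + ‖∑ i ∈ insert a s, (if i ∈ insert a t then z i else - z i)‖^2)
            = 2 * ‖∑ i ∈ s, (if i ∈ t then z i else - z i)‖^2 + 2 * ‖z a‖^2 := by
          intro t ht
          have hat : a ∉ t := fun h => ha (Finset.mem_powerset.1 ht h)
          rw [Finset.sum_insert ha, Finset.sum_insert ha, if_neg hat,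
            if_pos (Finset.mem_insert_self a t)]
          have : ∀ i ∈ s, (if i ∈ insert a t then z i else - z i)
              = (if i ∈ t then z i else - z i) := by
            intro i hi
            have : i ≠ a := fun h => ha (h ▸ hi)
            simp [Finset.mem_insert, this]
          rw [Finset.sum_congr rfl this]
          set S := ∑ i ∈ s, (if i ∈ t then z i else - z i)
          have h1 := norm_add_sq_real (-z a) S
          have h2 := norm_add_sq_real (z a) S
          have hi : (inner ℝ (-z a) S : ℝ) = - inner ℝ (z a) S := by
            rw [inner_neg_left]
          rw [norm_neg] at h1
          linarith [h1, h2, hi]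
        calc ∑ t ∈ s.powerset, ‖∑ i ∈ insert a s, (if i ∈ t then z i else - z i)‖^2
              + ∑ t ∈ s.powerset, ‖∑ i ∈ insert a s, (if i ∈ insert a t then z i else - z i)‖^2
            = ∑ t ∈ s.powerset, (‖∑ i ∈ insert a s, (if i ∈ t then z i else - z i)‖^2
              + ‖∑ i ∈ insert a s, (if i ∈ insert a t then z i else - z i)‖^2) := by
              rw [Finset.sum_add_distrib]
          _ = ∑ t ∈ s.powerset, (2 * ‖∑ i ∈ s, (if i ∈ t then z i else - z i)‖^2 + 2 * ‖z a‖^2) :=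
              Finset.sum_congr rfl key
          _ = 2^(insert a s).card * ∑ i ∈ insert a s, ‖z i‖^2 := by
              rw [Finset.sum_add_distrib, ← Finset.mul_sum, ih, Finset.sum_const,
                Finset.card_powerset, Finset.card_insert_of_notMem ha,
                Finset.sum_insert ha]
              push_cast
              ring
      · intro t ht u hu htu
        have hat : a ∉ t := fun h => ha (Finset.mem_powerset.1 ht h)
        have hau : a ∉ u := fun h => ha (Finset.mem_powerset.1 hu h)
        ext i
        by_cases hia : i = a
        · simp [hia, hat, hau]
        · constructor <;> intro hi <;>
          · have := Finset.ext_iff.1 htu i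
            simp [Finset.mem_insert, hia] at this ⊢
            tauto
      · rw [Finset.disjoint_left]
        intro t ht hti
        simp only [Finset.mem_image] at hti
        obtain ⟨u, hu, rfl⟩ := hti
        exact ha (Finset.mem_powerset.1 ht (Finset.mem_insert_self a u))


lemma rm_fiber_eq_Ico (N k i : ℕ) (h : (i+1)*2^k ≤ N) :
    (Finset.range N).filter (fun j => j / 2^k = i) = Finset.Ico (i*2^k) ((i+1)*2^k) := by
  have h2k : 0 < 2^k := Nat.pow_pos (by norm_num)
  ext j
  simp only [Finset.mem_filter, Finset.mem_range, Finset.mem_Ico]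
  constructor
  · rintro ⟨hjN, rfl⟩
    refine ⟨?_, ?_⟩
    · exact Nat.div_mul_le_self j (2^k)
    · exact (Nat.div_lt_iff_lt_mul h2k).1 (Nat.lt_succ_self _)
  · rintro ⟨h1, h2⟩
    exact ⟨lt_of_lt_of_le h2 h, Nat.div_eq_of_lt_le h1 h2⟩

lemma rm_block_bound {X : Type} [MeasurableSpace X] (μ : Measure X) (N : ℕ) (φ : ℕ → X → ℂ)
    (hφ : ∀ j, MemLp (φ j) 2 μ) (A : ℝ)
    (hsig : ∀ c : ℕ → ℤ, (∀ j, c j = -1 ∨ c j = 0 ∨ c j = 1) →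
      eLpNorm (fun x => ∑ j ∈ Finset.range N, (c j : ℂ) * φ j x) 2 μ ≤ ENNReal.ofReal A)
    (k : ℕ) :
    eLpNorm (fun x => Real.sqrt (∑ i ∈ Finset.range (N / 2^k + 1),
        ‖∑ j ∈ (Finset.range N).filter (fun j => j / 2^k = i), φ j x‖^2)) 2 μ
      ≤ ENNReal.ofReal A := by
  set s : Finset ℕ := Finset.range (N / 2^k + 1) with hs
  set B : ℕ → X → ℂ := fun i x => ∑ j ∈ (Finset.range N).filter (fun j => j / 2^k = i), φ j x
    with hB
  -- measurability
  have hBm : ∀ i, AEStronglyMeasurable (B i) μ :=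
    fun i => Finset.aestronglyMeasurable_fun_sum _ (fun j _ => (hφ j).aestronglyMeasurable)
  have hmeas : ∀ (f : X → ℂ), AEStronglyMeasurable f μ →
      AEMeasurable (fun x => ENNReal.ofReal (‖f x‖^2)) μ := by
    intro f hf
    exact ENNReal.measurable_ofReal.comp_aemeasurable
      ((hf.norm.aemeasurable).pow_const 2)
  -- pointwise enorm identity
  have hen : ∀ (z : ℂ), (‖z‖₊ : ENNReal) ^ (2:ℝ)
      = ENNReal.ofReal (‖z‖^2) := by
    intro z
    have h1 : ((‖z‖₊ : ENNReal)) ^ (2:ℝ) = ((‖z‖₊ : ENNReal))^(2:ℕ) := by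
      rw [← ENNReal.rpow_natCast]; norm_num
    rw [h1, ← enorm_eq_nnnorm, ← ofReal_norm, ← ENNReal.ofReal_pow (norm_nonneg _)]
  -- each signed block sum obeys the lintegral bound
  have key : ∀ t ∈ s.powerset,
      ∫⁻ x, ENNReal.ofReal (‖∑ i ∈ s, (if i ∈ t then B i x else - B i x)‖^2) ∂μ
        ≤ (ENNReal.ofReal A) ^ (2:ℝ) := by
    intro t ht
    set c : ℕ → ℤ := fun j => if j < N then (if j / 2^k ∈ t then 1 else -1) else 0 with hc
    have hcv : ∀ j, c j = -1 ∨ c j = 0 ∨ c j = 1 := by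
      intro j
      simp only [hc]
      split
      · split
        · right; right; rfl
        · left; rfl
      · right; left; rfl
    have hfun : ∀ x, (∑ j ∈ Finset.range N, (c j : ℂ) * φ j x)
        = ∑ i ∈ s, (if i ∈ t then B i x else - B i x) := by
      intro x
      have hmaps : ∀ j ∈ Finset.range N, j / 2^k ∈ s := by
        intro j hj
        simp only [hs, Finset.mem_range] at *
        exact Nat.lt_succ_of_le (Nat.div_le_div_right hj.le)
      calc ∑ j ∈ Finset.range N, (c j : ℂ) * φ j x
          = ∑ j ∈ Finset.range N, (if j / 2^k ∈ t then φ j x else - φ j x) := by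
            refine Finset.sum_congr rfl fun j hj => ?_
            rw [Finset.mem_range] at hj
            simp only [hc, if_pos hj]
            split <;> push_cast <;> ring
        _ = ∑ i ∈ s, ∑ j ∈ (Finset.range N).filter (fun j => j / 2^k = i),
              (if j / 2^k ∈ t then φ j x else - φ j x) :=
            (Finset.sum_fiberwise_of_maps_to hmaps _).symm
        _ = ∑ i ∈ s, (if i ∈ t then B i x else - B i x) := by
            refine Finset.sum_congr rfl fun i _ => ?_
            by_cases h : i ∈ t
            · rw [if_pos h]
              refine Finset.sum_congr rfl fun j hj => ?_
              rw [Finset.mem_filter] at hj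
              rw [if_pos (hj.2 ▸ h)]
            · rw [if_neg h, hB, ← Finset.sum_neg_distrib]
              refine Finset.sum_congr rfl fun j hj => ?_
              rw [Finset.mem_filter] at hj
              rw [if_neg (hj.2 ▸ h)]
    have hle := hsig c hcv
    rw [eLpNorm_eq_lintegral_rpow_enorm_toReal (by norm_num) (by norm_num)] at hle
    simp only [ENNReal.toReal_ofNat] at hle
    have hle2 := ENNReal.rpow_le_rpow hle (le_of_lt (two_pos (α := ℝ)))
    rw [← ENNReal.rpow_mul, one_div, inv_mul_cancel₀ (two_ne_zero (α := ℝ)),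
      ENNReal.rpow_one] at hle2
    calc ∫⁻ x, ENNReal.ofReal (‖∑ i ∈ s, (if i ∈ t then B i x else - B i x)‖^2) ∂μ
        = ∫⁻ x, ((‖∑ j ∈ Finset.range N, (c j : ℂ) * φ j x‖₊ : ENNReal)) ^ (2:ℝ) ∂μ := by
          refine lintegral_congr fun x => ?_
          rw [hfun]; exact (hen _).symm
      _ ≤ (ENNReal.ofReal A) ^ (2:ℝ) := hle2
  -- real version of hen
  have henR : ∀ (r : ℝ), 0 ≤ r → (‖r‖₊ : ENNReal) ^ (2:ℝ) = ENNReal.ofReal (r^2) := by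
    intro r hr
    have h1 : ((‖r‖₊ : ENNReal)) ^ (2:ℝ) = ((‖r‖₊ : ENNReal))^(2:ℕ) := by
      rw [← ENNReal.rpow_natCast]; norm_num
    rw [h1, ← enorm_eq_nnnorm, ← ofReal_norm, ← ENNReal.ofReal_pow (norm_nonneg _),
      Real.norm_eq_abs, abs_of_nonneg hr]
  have hsigned : ∀ t : Finset ℕ, AEStronglyMeasurable
      (fun x => ∑ i ∈ s, (if i ∈ t then B i x else - B i x)) μ := by
    intro t
    refine Finset.aestronglyMeasurable_fun_sum _ (fun i _ => ?_)
    by_cases h : i ∈ t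
    · simpa [h] using hBm i
    · simpa [h] using (hBm i).fun_neg
  have hswap : ∫⁻ x, ENNReal.ofReal (∑ i ∈ s, ‖B i x‖^2) ∂μ
      = ∑ i ∈ s, ∫⁻ x, ENNReal.ofReal (‖B i x‖^2) ∂μ := by
    rw [← lintegral_finset_sum' _ (fun i _ => hmeas _ (hBm i))]
    refine lintegral_congr fun x => ?_
    rw [ENNReal.ofReal_sum_of_nonneg (fun i _ => sq_nonneg _)]
  have hsum : ∑ i ∈ s, ∫⁻ x, ENNReal.ofReal (‖B i x‖^2) ∂μ ≤ (ENNReal.ofReal A)^(2:ℝ) := by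
    have hmul : (2:ENNReal)^s.card * ∑ i ∈ s, ∫⁻ x, ENNReal.ofReal (‖B i x‖^2) ∂μ
        = ∑ t ∈ s.powerset,
            ∫⁻ x, ENNReal.ofReal (‖∑ i ∈ s, (if i ∈ t then B i x else - B i x)‖^2) ∂μ := by
      rw [← lintegral_finset_sum' _ (fun t _ => hmeas _ (hsigned t))]
      rw [← hswap]
      rw [← lintegral_const_mul' _ _ (ENNReal.pow_ne_top (by norm_num))]
      refine lintegral_congr fun x => ?_
      rw [← ENNReal.ofReal_sum_of_nonneg (fun t _ => sq_nonneg _), rm_signs s (fun i => B i x),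
        ENNReal.ofReal_mul (by positivity)]
      congr 1
      rw [ENNReal.ofReal_pow (by norm_num)]
      norm_num
    have hle3 : (2:ENNReal)^s.card * ∑ i ∈ s, ∫⁻ x, ENNReal.ofReal (‖B i x‖^2) ∂μ
        ≤ (2:ENNReal)^s.card * (ENNReal.ofReal A)^(2:ℝ) := by
      rw [hmul]
      calc ∑ t ∈ s.powerset,
            ∫⁻ x, ENNReal.ofReal (‖∑ i ∈ s, (if i ∈ t then B i x else - B i x)‖^2) ∂μ
          ≤ ∑ _t ∈ s.powerset, (ENNReal.ofReal A)^(2:ℝ) := Finset.sum_le_sum key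
        _ = (2:ENNReal)^s.card * (ENNReal.ofReal A)^(2:ℝ) := by
            rw [Finset.sum_const, Finset.card_powerset, nsmul_eq_mul]
            norm_num
    exact (ENNReal.mul_le_mul_iff_right (pow_ne_zero _ (by norm_num)) (ENNReal.pow_ne_top (by norm_num))).1 hle3
  rw [eLpNorm_eq_lintegral_rpow_enorm_toReal (by norm_num) (by norm_num)]
  simp only [ENNReal.toReal_ofNat]
  have hG : ∫⁻ x, (‖Real.sqrt (∑ i ∈ s, ‖B i x‖^2)‖₊ : ENNReal) ^ (2:ℝ) ∂μ
      = ∫⁻ x, ENNReal.ofReal (∑ i ∈ s, ‖B i x‖^2) ∂μ := by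
    refine lintegral_congr fun x => ?_
    have hS : (0:ℝ) ≤ ∑ i ∈ s, ‖B i x‖^2 := Finset.sum_nonneg fun i _ => sq_nonneg _
    rw [henR _ (Real.sqrt_nonneg _), Real.sq_sqrt hS]
  change (∫⁻ x, (‖Real.sqrt (∑ i ∈ s, ‖B i x‖^2)‖₊ : ENNReal) ^ (2:ℝ) ∂μ) ^ ((1:ℝ)/2) ≤ ENNReal.ofReal A
  rw [hG, hswap]
  calc (∑ i ∈ s, ∫⁻ x, ENNReal.ofReal (‖B i x‖^2) ∂μ) ^ ((1:ℝ)/2)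
      ≤ ((ENNReal.ofReal A)^(2:ℝ)) ^ ((1:ℝ)/2) := ENNReal.rpow_le_rpow hsum (by norm_num)
    _ = ENNReal.ofReal A := by
        rw [← ENNReal.rpow_mul]
        norm_num

/-- an abstract Rademacher–Menshov theorem.  If all partial signed sums of
`φ₁, …, φ_N` have `L²(μ)` norm at most `A`, then the maximal partial sum function has
`L²(μ)` norm at most `C · A · log(2 + N)`. -/
theorem stmt6 :
    ∃ C : ℝ, 0 < C ∧
      ∀ (X : Type) (_ : MeasurableSpace X) (μ : Measure X) (N : ℕ), 1 ≤ N →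
        ∀ φ : ℕ → X → ℂ, (∀ j, MemLp (φ j) 2 μ) →
          ∀ A : ℝ, 0 < A →
            (∀ c : ℕ → ℤ, (∀ j, c j = -1 ∨ c j = 0 ∨ c j = 1) →
              eLpNorm (fun x => ∑ j ∈ Finset.range N, (c j : ℂ) * φ j x) 2 μ ≤
                ENNReal.ofReal A) →
            eLpNorm (fun x => ⨆ n : Fin N, ‖∑ j ∈ Finset.range (n + 1), φ j x‖) 2 μ ≤
              ENNReal.ofReal (C * A * Real.log (2 + N)) := by
  refine ⟨2 / Real.log 2, div_pos two_pos (Real.log_pos one_lt_two), ?_⟩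
  intro X mX μ N hN φ hφ A hA hsig
  classical
  set K := Nat.size N with hKdef
  set B : ℕ → ℕ → X → ℂ :=
    fun k i x => ∑ j ∈ (Finset.range N).filter (fun j => j / 2^k = i), φ j x with hB
  set G : ℕ → X → ℝ :=
    fun k x => Real.sqrt (∑ i ∈ Finset.range (N / 2^k + 1), ‖B k i x‖^2) with hG
  have hGbound : ∀ k, eLpNorm (G k) 2 μ ≤ ENNReal.ofReal A :=
    fun k => rm_block_bound μ N φ hφ A hsig k
  have hGmeas : ∀ k, AEStronglyMeasurable (G k) μ := by
    intro k
    have h1 : AEStronglyMeasurable (fun x => ∑ i ∈ Finset.range (N/2^k+1), ‖B k i x‖^2) μ :=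
      Finset.aestronglyMeasurable_fun_sum _ (fun i _ =>
        (continuous_pow 2).comp_aestronglyMeasurable
          ((Finset.aestronglyMeasurable_fun_sum _
            (fun j _ => (hφ j).aestronglyMeasurable)).norm))
    exact Real.continuous_sqrt.comp_aestronglyMeasurable h1
  haveI : Nonempty (Fin N) := ⟨⟨0, hN⟩⟩
  -- pointwise domination
  have hpt : ∀ x, (⨆ n : Fin N, ‖∑ j ∈ Finset.range ((n:ℕ) + 1), φ j x‖)
      ≤ ∑ k ∈ Finset.range K, G k x := by
    intro x
    refine ciSup_le fun n => ?_
    set m := (n:ℕ) + 1 with hm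
    have hmN : m ≤ N := Nat.succ_le_of_lt n.isLt
    set g : ℕ → ℕ := fun k => 2^k * (m / 2^k) with hg
    have hgd : ∀ k, g (k+1) ≤ g k := by
      intro k
      simp only [hg]
      have e1 : m / 2^(k+1) = m / 2^k / 2 := by rw [pow_succ, Nat.div_div_eq_div_mul]
      rw [e1, pow_succ]
      have e2 : 2 * (m / 2^k / 2) ≤ m / 2^k := by omega
      calc 2^k * 2 * (m/2^k/2) = 2^k * (2 * (m/2^k/2)) := by ring
        _ ≤ 2^k * (m/2^k) := Nat.mul_le_mul_left _ e2
    have hg0 : g 0 = m := by simp [hg]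
    have hgK : g K = 0 := by
      have : m / 2^K = 0 :=
        Nat.div_eq_of_lt (lt_of_le_of_lt hmN (Nat.lt_size_self N))
      simp [hg, this]
    have hdecomp : ∑ j ∈ Finset.range m, φ j x
        = ∑ k ∈ Finset.range K, ∑ j ∈ Finset.Ico (g (k+1)) (g k), φ j x := by
      rw [rm_telescope (fun j => φ j x) g hgd K, hgK, hg0, ← Finset.range_eq_Ico]
    calc ‖∑ j ∈ Finset.range m, φ j x‖
        = ‖∑ k ∈ Finset.range K, ∑ j ∈ Finset.Ico (g (k+1)) (g k), φ j x‖ := by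
          rw [hdecomp]
      _ ≤ ∑ k ∈ Finset.range K, ‖∑ j ∈ Finset.Ico (g (k+1)) (g k), φ j x‖ :=
          norm_sum_le _ _
      _ ≤ ∑ k ∈ Finset.range K, G k x := by
          refine Finset.sum_le_sum fun k _ => ?_
          rcases eq_or_lt_of_le (hgd k) with heq | hlt
          · rw [heq, Finset.Ico_self, Finset.sum_empty, norm_zero]
            exact Real.sqrt_nonneg _
          · -- the dyadic block case
            have h2k : 0 < 2^k := Nat.pow_pos (by norm_num)
            have e1 : m / 2^(k+1) = m / 2^k / 2 := by rw [pow_succ, Nat.div_div_eq_div_mul]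
            set q := m / 2^k with hq
            set i := 2 * (m / 2^(k+1)) with hidef
            have hiq : i = 2 * (q / 2) := by rw [hidef, e1]
            have hgsucc : g (k+1) = 2^k * (2 * (q/2)) := by
              show 2^(k+1) * (m / 2^(k+1)) = _
              rw [e1, pow_succ]; ring
            have hgkq : g k = 2^k * q := rfl
            have hmod : q % 2 = 1 := by
              rcases Nat.mod_two_eq_zero_or_one q with h0 | h1
              · exfalso
                have hqq : q = 2 * (q / 2) := by omega
                have heq2 : g k = g (k+1) := by rw [hgkq, hgsucc, ← hqq]
                omega
              · exact h1
            have hq1 : q = i + 1 := by omega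
            have h1 : g (k+1) = i * 2^k := by rw [hgsucc, ← hiq]; ring
            have h2 : g k = (i+1) * 2^k := by rw [hgkq, ← hq1]; ring
            have hgkm : g k ≤ m := by
              rw [hgkq]
              calc 2^k * (m / 2^k) = (m / 2^k) * 2^k := by ring
                _ ≤ m := Nat.div_mul_le_self m (2^k)
            have hiN : (i+1)*2^k ≤ N := by
              rw [← h2]; exact le_trans hgkm hmN
            rw [h1, h2, ← rm_fiber_eq_Ico N k i hiN]
            have hiMem : i ∈ Finset.range (N/2^k + 1) := by
              rw [Finset.mem_range, Nat.lt_succ_iff, Nat.le_div_iff_mul_le h2k]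
              calc i * 2^k ≤ (i+1) * 2^k := Nat.mul_le_mul_right _ (by omega)
                _ ≤ N := hiN
            rw [hG]
            rw [Real.le_sqrt (norm_nonneg _)
              (Finset.sum_nonneg fun _ _ => sq_nonneg _)]
            exact Finset.single_le_sum
              (f := fun i' => ‖B k i' x‖^2) (fun _ _ => sq_nonneg _) hiMem
  -- combine
  have hstep : eLpNorm (fun x => ⨆ n : Fin N, ‖∑ j ∈ Finset.range ((n:ℕ) + 1), φ j x‖) 2 μ
      ≤ ∑ k ∈ Finset.range K, eLpNorm (G k) 2 μ := by
    refine le_trans (eLpNorm_mono fun x => ?_)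
      (eLpNorm_sum_le (f := G) (s := Finset.range K) (fun k _ => hGmeas k) (by norm_num))
    have hR0 : (0:ℝ) ≤ (∑ k ∈ Finset.range K, G k) x := by
      rw [Finset.sum_apply]
      exact Finset.sum_nonneg fun k _ => Real.sqrt_nonneg _
    have hsup0 : (0:ℝ) ≤ ⨆ n : Fin N, ‖∑ j ∈ Finset.range ((n:ℕ) + 1), φ j x‖ :=
      Real.iSup_nonneg fun n => norm_nonneg _
    rw [Real.norm_eq_abs, Real.norm_eq_abs, abs_of_nonneg hR0, abs_of_nonneg hsup0]
    calc (⨆ n : Fin N, ‖∑ j ∈ Finset.range ((n:ℕ) + 1), φ j x‖)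
        ≤ ∑ k ∈ Finset.range K, G k x := hpt x
      _ = (∑ k ∈ Finset.range K, G k) x := by rw [Finset.sum_apply]
  have hK1 : 1 ≤ K := Nat.size_pos.2 hN
  have hlog2 : 0 < Real.log 2 := Real.log_pos one_lt_two
  have hlogN : Real.log 2 ≤ Real.log (2 + N) :=
    Real.log_le_log (by norm_num) (le_add_of_nonneg_right (Nat.cast_nonneg N))
  have hKreal : (K:ℝ) ≤ 2 / Real.log 2 * Real.log (2 + N) := by
    have h2K : (2:ℝ)^(K-1) ≤ N := by
      have := Nat.lt_size.1 (by omega : K - 1 < Nat.size N)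
      calc (2:ℝ)^(K-1) = ((2^(K-1) : ℕ) : ℝ) := by push_cast; ring
        _ ≤ N := by exact_mod_cast this
    have hlogpow : ((K:ℝ) - 1) * Real.log 2 ≤ Real.log (2 + N) := by
      have h3 : Real.log ((2:ℝ)^(K-1)) ≤ Real.log (2 + N) :=
        Real.log_le_log (by positivity) (by
          calc (2:ℝ)^(K-1) ≤ N := h2K
            _ ≤ 2 + N := by linarith)
      rw [Real.log_pow] at h3
      calc ((K:ℝ) - 1) * Real.log 2 = ((K - 1 : ℕ) : ℝ) * Real.log 2 := by
            rw [Nat.cast_sub hK1]; norm_num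
        _ ≤ Real.log (2 + N) := h3
    rw [div_mul_eq_mul_div, le_div_iff₀ hlog2]
    nlinarith [hlogpow, hlogN]
  calc eLpNorm (fun x => ⨆ n : Fin N, ‖∑ j ∈ Finset.range ((n:ℕ) + 1), φ j x‖) 2 μ
      ≤ ∑ k ∈ Finset.range K, eLpNorm (G k) 2 μ := hstep
    _ ≤ ∑ _k ∈ Finset.range K, ENNReal.ofReal A :=
        Finset.sum_le_sum fun k _ => hGbound k
    _ = (K : ENNReal) * ENNReal.ofReal A := by
        rw [Finset.sum_const, Finset.card_range, nsmul_eq_mul]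
    _ = ENNReal.ofReal ((K:ℝ) * A) := by
        rw [ENNReal.ofReal_mul (by positivity), ENNReal.ofReal_natCast]
    _ ≤ ENNReal.ofReal (2 / Real.log 2 * A * Real.log (2 + N)) := by
        refine ENNReal.ofReal_le_ofReal ?_
        calc (K:ℝ) * A ≤ (2 / Real.log 2 * Real.log (2 + N)) * A := by
              exact mul_le_mul_of_nonneg_right hKreal hA.le
          _ = 2 / Real.log 2 * A * Real.log (2 + N) := by ring
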